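/- Let T be an irreducible aperiodic nonnegative n×n matrix with Perron eigenvalue λ₁ and positive right eigenvector u. Then for all i, j, the limit as N → ∞ of T_{ij} (T^{N−1})_j 1 / ((T^N)_i 1) exists and equals T_{ij} u_j / (λ₁ u_i). That is, the N-step survival-conditioned one-step transition probabilities converge to the twisted kernel. -/

import Mathlib

open Matrix BigOperators Filter Topology

section Aux
variable {n : Type*} [Fintype n] [DecidableEq n]

lemma sq8_rowsum_pow (S : Matrix n n ℝ) (h : ∀ i, ∑ j, S i j = 1) :
    ∀ m i, ∑ j, (S ^ m) i j = 1 := by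
  intro m
  induction m with
  | zero => intro i; simp [Matrix.one_apply]
  | succ m ih =>
    intro i
    rw [pow_succ]
    simp only [Matrix.mul_apply]
    rw [Finset.sum_comm]
    calc ∑ l, ∑ j, (S ^ m) i l * S l j
        = ∑ l, (S ^ m) i l * ∑ j, S l j := by
          simp [Finset.mul_sum]
      _ = ∑ l, (S ^ m) i l := by simp [h]
      _ = 1 := ih i

lemma sq8_nonneg_pow (S : Matrix n n ℝ) (h : ∀ i j, 0 ≤ S i j) :
    ∀ m i j, 0 ≤ (S ^ m) i j := by
  intro m
  induction m with
  | zero => intro i j; rw [pow_zero, Matrix.one_apply]; positivity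
  | succ m ih =>
    intro i j
    rw [pow_succ, Matrix.mul_apply]
    exact Finset.sum_nonneg fun l _ => mul_nonneg (ih i l) (h l j)

variable [Nonempty n]

omit [DecidableEq n] in
lemma sq8_mulVec_le_sup (P : Matrix n n ℝ) (hP : ∀ i j, 0 ≤ P i j)
    (hrow : ∀ i, ∑ j, P i j = 1) (v : n → ℝ) (i : n) :
    (P *ᵥ v) i ≤ Finset.univ.sup' Finset.univ_nonempty v := by
  have h0 : (P *ᵥ v) i = ∑ j, P i j * v j := by
    simp [Matrix.mulVec, dotProduct]
  rw [h0]
  calc ∑ j, P i j * v j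
      ≤ ∑ j, P i j * Finset.univ.sup' Finset.univ_nonempty v :=
        Finset.sum_le_sum fun j _ => mul_le_mul_of_nonneg_left
          (Finset.le_sup' v (Finset.mem_univ j)) (hP i j)
    _ = Finset.univ.sup' Finset.univ_nonempty v := by
        rw [← Finset.sum_mul, hrow, one_mul]

omit [DecidableEq n] in
lemma sq8_inf_le_mulVec (P : Matrix n n ℝ) (hP : ∀ i j, 0 ≤ P i j)
    (hrow : ∀ i, ∑ j, P i j = 1) (v : n → ℝ) (i : n) :
    Finset.univ.inf' Finset.univ_nonempty v ≤ (P *ᵥ v) i := by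
  have h0 : (P *ᵥ v) i = ∑ j, P i j * v j := by
    simp [Matrix.mulVec, dotProduct]
  rw [h0]
  calc Finset.univ.inf' Finset.univ_nonempty v
      = ∑ j, P i j * Finset.univ.inf' Finset.univ_nonempty v := by
        rw [← Finset.sum_mul, hrow, one_mul]
    _ ≤ ∑ j, P i j * v j :=
        Finset.sum_le_sum fun j _ => mul_le_mul_of_nonneg_left
          (Finset.inf'_le v (Finset.mem_univ j)) (hP i j)

omit [DecidableEq n] in
lemma sq8_doeblin (P : Matrix n n ℝ)
    (hrow : ∀ i, ∑ j, P i j = 1) (v : n → ℝ) (i i' : n) :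
    (P *ᵥ v) i - (P *ᵥ v) i' ≤
      (1 - ∑ j, min (P i j) (P i' j)) *
        (Finset.univ.sup' Finset.univ_nonempty v -
          Finset.univ.inf' Finset.univ_nonempty v) := by
  set M := Finset.univ.sup' Finset.univ_nonempty v with hM
  set m := Finset.univ.inf' Finset.univ_nonempty v with hm
  set q : n → ℝ := fun j => min (P i j) (P i' j) with hq
  have hq1 : ∀ j, 0 ≤ P i j - q j := fun j => sub_nonneg.2 (min_le_left _ _)
  have hq2 : ∀ j, 0 ≤ P i' j - q j := fun j => sub_nonneg.2 (min_le_right _ _)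
  have hvM : ∀ j, v j ≤ M := fun j => Finset.le_sup' v (Finset.mem_univ j)
  have hmv : ∀ j, m ≤ v j := fun j => Finset.inf'_le v (Finset.mem_univ j)
  have hsum1 : ∑ j, (P i j - q j) = 1 - ∑ j, q j := by
    rw [Finset.sum_sub_distrib, hrow]
  have hsum2 : ∑ j, (P i' j - q j) = 1 - ∑ j, q j := by
    rw [Finset.sum_sub_distrib, hrow]
  have h1 : ∑ j, (P i j - q j) * v j ≤ (1 - ∑ j, q j) * M := by
    calc ∑ j, (P i j - q j) * v j
        ≤ ∑ j, (P i j - q j) * M :=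
          Finset.sum_le_sum fun j _ => mul_le_mul_of_nonneg_left (hvM j) (hq1 j)
      _ = (1 - ∑ j, q j) * M := by rw [← Finset.sum_mul, hsum1]
  have h2 : (1 - ∑ j, q j) * m ≤ ∑ j, (P i' j - q j) * v j := by
    calc (1 - ∑ j, q j) * m
        = ∑ j, (P i' j - q j) * m := by rw [← Finset.sum_mul, hsum2]
      _ ≤ ∑ j, (P i' j - q j) * v j :=
          Finset.sum_le_sum fun j _ => mul_le_mul_of_nonneg_left (hmv j) (hq2 j)
  have hkey : (P *ᵥ v) i - (P *ᵥ v) i' =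
      ∑ j, (P i j - q j) * v j - ∑ j, (P i' j - q j) * v j := by
    have e1 : (P *ᵥ v) i = ∑ j, P i j * v j := by simp [Matrix.mulVec, dotProduct]
    have e2 : (P *ᵥ v) i' = ∑ j, P i' j * v j := by simp [Matrix.mulVec, dotProduct]
    rw [e1, e2, ← Finset.sum_sub_distrib, ← Finset.sum_sub_distrib]
    exact Finset.sum_congr rfl fun j _ => by ring
  rw [hkey]
  nlinarith [h1, h2]

end Aux

set_option maxHeartbeats 1000000 in
/-- The `N`-step survival-conditioned one-step transition probabilities
`T_{ij}(T^{N-1})_j 1 / ((T^N)_i 1)` converge to the twisted kernel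
`Ť_{ij} = T_{ij} u_j / (λ₁ u_i)` as `N → ∞`. -/
theorem stmt8 {n : Type*} [Fintype n] [DecidableEq n] (T : Matrix n n ℝ)
    (hnonneg : ∀ i j, 0 ≤ T i j)
    (hprim : ∃ k, 0 < k ∧ ∀ i j, 0 < (T ^ k) i j)
    (lam : ℝ) (hlam : 0 < lam)
    (u : n → ℝ) (hu : ∀ i, 0 < u i)
    (hru : T *ᵥ u = lam • u) :
    ∀ i j, Tendsto
      (fun N : ℕ => T i j * (∑ l, (T ^ (N - 1)) j l) / (∑ l, (T ^ N) i l))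
      atTop (𝓝 (T i j * u j / (lam * u i))) := by
  obtain ⟨k, hk0, hkpos⟩ := hprim
  intro i₀ j₀
  haveI : Nonempty n := ⟨i₀⟩
  have hu0 : ∀ i, u i ≠ 0 := fun i => (hu i).ne'
  have hl0 : lam ≠ 0 := hlam.ne'
  -- the twisted kernel
  set S : Matrix n n ℝ := Matrix.of fun i j => T i j * u j / (lam * u i) with hSdef
  have hSapp : ∀ i j, S i j = T i j * u j / (lam * u i) := fun i j => rfl
  have hS0 : ∀ i j, 0 ≤ S i j := fun i j =>
    div_nonneg (mul_nonneg (hnonneg i j) (hu j).le) (mul_nonneg hlam.le (hu i).le)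
  have hrowT : ∀ i, ∑ j, T i j * u j = lam * u i := by
    intro i
    have h := congrFun hru i
    simpa [Matrix.mulVec, dotProduct] using h
  have hSrow : ∀ i, ∑ j, S i j = 1 := by
    intro i
    have h0 : ∑ j, S i j = ∑ j, T i j * u j / (lam * u i) := rfl
    rw [h0, ← Finset.sum_div, hrowT]
    exact div_self (mul_ne_zero hl0 (hu0 i))
  have hSpow : ∀ m i j, (S ^ m) i j = (T ^ m) i j * u j / (lam ^ m * u i) := by
    intro m
    induction m with
    | zero =>
      intro i j
      by_cases h : i = j <;> simp [h, Matrix.one_apply, hu0]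
    | succ m ih =>
      intro i j
      rw [pow_succ, pow_succ, Matrix.mul_apply, Matrix.mul_apply]
      calc ∑ l, (S ^ m) i l * S l j
          = ∑ l, (T ^ m) i l * T l j * u j / (lam ^ (m + 1) * u i) := by
            refine Finset.sum_congr rfl fun l _ => ?_
            rw [ih, hSapp, pow_succ]
            have h1 := hu0 l
            have h2 := hu0 i
            field_simp
        _ = (∑ l, (T ^ m) i l * T l j) * u j / (lam ^ (m + 1) * u i) := by
            rw [← Finset.sum_div, ← Finset.sum_mul]
  have hSprow := sq8_rowsum_pow S hSrow
  have hSpnn := sq8_nonneg_pow S hS0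
  -- the rescaled row sums
  set w : n → ℝ := fun i => (u i)⁻¹ with hw
  set v : ℕ → n → ℝ := fun N => (S ^ N) *ᵥ w with hv
  have hvT : ∀ N i, v N i = (∑ l, (T ^ N) i l) / (lam ^ N * u i) := by
    intro N i
    have h0 : v N i = ∑ l, (S ^ N) i l * (u l)⁻¹ := by
      simp [hv, Matrix.mulVec, dotProduct, hw]
    rw [h0]
    calc ∑ l, (S ^ N) i l * (u l)⁻¹
        = ∑ l, (T ^ N) i l / (lam ^ N * u i) := by
          refine Finset.sum_congr rfl fun l _ => ?_
          rw [hSpow]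
          have h1 := hu0 l
          have h2 := hu0 i
          field_simp
      _ = (∑ l, (T ^ N) i l) / (lam ^ N * u i) := by rw [Finset.sum_div]
  have hvstep : ∀ N q, v (q + N) = (S ^ q) *ᵥ v N := by
    intro N q
    simp only [hv, pow_add, ← Matrix.mulVec_mulVec]
  set Mf : ℕ → ℝ := fun N => Finset.univ.sup' Finset.univ_nonempty (v N) with hMf
  set mf : ℕ → ℝ := fun N => Finset.univ.inf' Finset.univ_nonempty (v N) with hmf
  have hMdec : ∀ N, Mf (N + 1) ≤ Mf N := by
    intro N
    apply Finset.sup'_le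
    intro b _
    have h1 : v (N + 1) = S *ᵥ v N := by
      have := hvstep N 1
      simpa [Nat.add_comm] using this
    rw [h1]
    exact sq8_mulVec_le_sup S hS0 hSrow (v N) b
  have hminc : ∀ N, mf N ≤ mf (N + 1) := by
    intro N
    apply Finset.le_inf'
    intro b _
    have h1 : v (N + 1) = S *ᵥ v N := by
      have := hvstep N 1
      simpa [Nat.add_comm] using this
    rw [h1]
    exact sq8_inf_le_mulVec S hS0 hSrow (v N) b
  have hManti : Antitone Mf := antitone_nat_of_succ_le hMdec
  have hmmono : Monotone mf := monotone_nat_of_le_succ hminc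
  have hmM : ∀ N, mf N ≤ Mf N := fun N =>
    le_trans (Finset.inf'_le (v N) (Finset.mem_univ i₀))
      (Finset.le_sup' (v N) (Finset.mem_univ i₀))
  -- positivity
  have hv0 : ∀ i, v 0 i = (u i)⁻¹ := by
    intro i
    simp [hv, hw]
  have hm0 : 0 < mf 0 := by
    obtain ⟨b, _, hb⟩ := Finset.exists_mem_eq_inf' (Finset.univ_nonempty) (v 0)
    have : mf 0 = v 0 b := by simp only [hmf]; rw [hb]
    rw [this, hv0]
    exact inv_pos.2 (hu b)
  have hmpos : ∀ N, 0 < mf N := fun N => lt_of_lt_of_le hm0 (hmmono (Nat.zero_le N))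
  have hvpos : ∀ N i, 0 < v N i := fun N i =>
    lt_of_lt_of_le (hmpos N) (Finset.inf'_le (v N) (Finset.mem_univ i))
  -- contraction constant
  set ε : ℝ := Finset.univ.inf' Finset.univ_nonempty
    (fun p : n × n => (S ^ k) p.1 p.2) with hε
  have hεpos : 0 < ε := by
    obtain ⟨p, _, hp⟩ := Finset.exists_mem_eq_inf' (Finset.univ_nonempty)
      (fun p : n × n => (S ^ k) p.1 p.2)
    rw [hε, hp, hSpow]
    exact div_pos (mul_pos (hkpos _ _) (hu _)) (mul_pos (pow_pos hlam k) (hu _))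
  set θ : ℝ := 1 - (Fintype.card n : ℝ) * ε with hθ
  have hcard : (0 : ℝ) < Fintype.card n := by
    exact_mod_cast Fintype.card_pos
  have hεle : ∀ a b : n, (Fintype.card n : ℝ) * ε ≤ ∑ j, min ((S ^ k) a j) ((S ^ k) b j) := by
    intro a b
    have h1 : (Fintype.card n : ℝ) * ε = ∑ _j : n, ε := by
      rw [Finset.sum_const, nsmul_eq_mul]
      simp
    rw [h1]
    refine Finset.sum_le_sum fun j _ => ?_
    refine le_min ?_ ?_
    · exact Finset.inf'_le (fun p : n × n => (S ^ k) p.1 p.2) (Finset.mem_univ (a, j))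
    · exact Finset.inf'_le (fun p : n × n => (S ^ k) p.1 p.2) (Finset.mem_univ (b, j))
  have hθ1 : θ < 1 := by
    have : 0 < (Fintype.card n : ℝ) * ε := mul_pos hcard hεpos
    rw [hθ]; linarith
  have hθ0 : 0 ≤ θ := by
    have h1 := hεle i₀ i₀
    have h2 : ∑ j, min ((S ^ k) i₀ j) ((S ^ k) i₀ j) = 1 := by
      simp [hSprow k i₀]
    rw [hθ]; rw [h2] at h1; linarith
  -- contraction estimate
  have hcontr : ∀ N, Mf (N + k) - mf (N + k) ≤ θ * (Mf N - mf N) := by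
    intro N
    obtain ⟨a, _, ha⟩ := Finset.exists_mem_eq_sup' (Finset.univ_nonempty) (v (N + k))
    obtain ⟨b, _, hb⟩ := Finset.exists_mem_eq_inf' (Finset.univ_nonempty) (v (N + k))
    have hvk : v (N + k) = (S ^ k) *ᵥ v N := by
      rw [Nat.add_comm]; exact hvstep N k
    have hd := sq8_doeblin (S ^ k) (hSprow k) (v N) a b
    rw [← hvk] at hd
    have hosc0 : 0 ≤ Mf N - mf N := sub_nonneg.2 (hmM N)
    have heq : Mf (N + k) - mf (N + k) = v (N + k) a - v (N + k) b := by
      simp only [hMf, hmf]; rw [ha, hb]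
    calc Mf (N + k) - mf (N + k) = v (N + k) a - v (N + k) b := heq
      _ ≤ (1 - ∑ j, min ((S ^ k) a j) ((S ^ k) b j)) * (Mf N - mf N) := hd
      _ ≤ θ * (Mf N - mf N) := by
          refine mul_le_mul_of_nonneg_right ?_ hosc0
          have := hεle a b
          rw [hθ]; linarith
  have hoscanti : Antitone (fun N => Mf N - mf N) := by
    apply antitone_nat_of_succ_le
    intro N
    have h1 := hMdec N
    have h2 := hminc N
    show Mf (N + 1) - mf (N + 1) ≤ Mf N - mf N
    linarith
  have hgeo : ∀ a, Mf (a * k) - mf (a * k) ≤ θ ^ a * (Mf 0 - mf 0) := by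
    intro a
    induction a with
    | zero => simp
    | succ a ih =>
      have h1 : Mf (a * k + k) - mf (a * k + k) ≤ θ * (Mf (a * k) - mf (a * k)) :=
        hcontr (a * k)
      have h2 : (a + 1) * k = a * k + k := by ring
      rw [h2]
      calc Mf (a * k + k) - mf (a * k + k)
          ≤ θ * (Mf (a * k) - mf (a * k)) := h1
        _ ≤ θ * (θ ^ a * (Mf 0 - mf 0)) := mul_le_mul_of_nonneg_left ih hθ0
        _ = θ ^ (a + 1) * (Mf 0 - mf 0) := by ring
  have hoscbd : ∀ N, Mf N - mf N ≤ θ ^ (N / k) * (Mf 0 - mf 0) := by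
    intro N
    have h1 : N / k * k ≤ N := Nat.div_mul_le_self N k
    exact le_trans (hoscanti h1) (hgeo (N / k))
  have hdiv : Tendsto (fun N : ℕ => N / k) atTop atTop := by
    apply tendsto_atTop_atTop.2
    intro b
    exact ⟨b * k, fun N hN => (Nat.le_div_iff_mul_le hk0).2 hN⟩
  have hg : Tendsto (fun N : ℕ => θ ^ (N / k) * (Mf 0 - mf 0)) atTop (𝓝 0) := by
    have h1 : Tendsto (fun a : ℕ => θ ^ a) atTop (𝓝 0) :=
      tendsto_pow_atTop_nhds_zero_of_lt_one hθ0 hθ1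
    have h2 := (h1.comp hdiv).mul_const (Mf 0 - mf 0)
    simpa using h2
  have hosc_to : Tendsto (fun N => Mf N - mf N) atTop (𝓝 0) :=
    squeeze_zero (fun N => sub_nonneg.2 (hmM N)) hoscbd hg
  have hMbdd : BddBelow (Set.range Mf) := by
    refine ⟨mf 0, ?_⟩
    rintro x ⟨N, rfl⟩
    exact le_trans (hmmono (Nat.zero_le N)) (hmM N)
  have hMlim : Tendsto Mf atTop (𝓝 (⨅ N, Mf N)) := tendsto_atTop_ciInf hManti hMbdd
  set L : ℝ := ⨅ N, Mf N with hL
  have hmlim : Tendsto mf atTop (𝓝 L) := by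
    have h1 := hMlim.sub hosc_to
    simpa using h1
  have hLpos : 0 < L := by
    have h1 : mf 0 ≤ L := le_ciInf fun N => le_trans (hmmono (Nat.zero_le N)) (hmM N)
    linarith
  have hv_to : ∀ i, Tendsto (fun N => v N i) atTop (𝓝 L) := by
    intro i
    refine tendsto_of_tendsto_of_tendsto_of_le_of_le hmlim hMlim ?_ ?_
    · exact fun N => Finset.inf'_le (v N) (Finset.mem_univ i)
    · exact fun N => Finset.le_sup' (v N) (Finset.mem_univ i)
  -- final assembly
  have htend : Tendsto
      (fun N : ℕ => T i₀ j₀ * u j₀ / (lam * u i₀) * (v (N - 1) j₀ / v N i₀)) atTop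
      (𝓝 (T i₀ j₀ * u j₀ / (lam * u i₀))) := by
    have h1 : Tendsto (fun N : ℕ => v (N - 1) j₀) atTop (𝓝 L) :=
      (hv_to j₀).comp (tendsto_sub_atTop_nat 1)
    have h2 := (h1.div (hv_to i₀) hLpos.ne').const_mul (T i₀ j₀ * u j₀ / (lam * u i₀))
    simpa [div_self hLpos.ne'] using h2
  apply htend.congr'
  filter_upwards [eventually_ge_atTop 1] with N hN
  have e1 : ∑ l, (T ^ (N - 1)) j₀ l = v (N - 1) j₀ * (lam ^ (N - 1) * u j₀) := by
    rw [hvT]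
    exact (div_mul_cancel₀ _ (mul_ne_zero (pow_ne_zero _ hl0) (hu0 _))).symm
  have e2 : ∑ l, (T ^ N) i₀ l = v N i₀ * (lam ^ N * u i₀) := by
    rw [hvT]
    exact (div_mul_cancel₀ _ (mul_ne_zero (pow_ne_zero _ hl0) (hu0 _))).symm
  rw [e2, e1]
  have hNe : N - 1 + 1 = N := Nat.succ_pred_eq_of_pos hN
  have hlp : lam ^ N = lam ^ (N - 1) * lam := by rw [← pow_succ, hNe]
  rw [hlp]
  have hvN : v N i₀ ≠ 0 := (hvpos N i₀).ne'
  have h1 : lam ^ (N - 1) ≠ 0 := pow_ne_zero _ hl0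
  have h2 := hu0 i₀
  have h3 := hu0 j₀
  field_simp
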